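/- Let a, b ∈ ℝ and define the sequences x_1 = (a + √(a² + 8))/2, y_1 = (s + √(s² + 6))/2 where s = b − (|a| + √2)/2, and recursively x_{n+1} = (A_n + √(A_n² + 8))/2 with A_n = a − 1/y_n + 1/(x_n + y_n), y_{n+1} = (B_n + √(B_n² + 8))/2 with B_n = b − 1/x_n + 1/(x_n + y_n). Then x_n > 0 and y_n > 0 for all n ≥ 1, and for all n ≥ 1, x_{n+1} < (a + √(a² + 8))/2 and y_{n+1} < (b + √(b² + 8))/2. -/
import Mathlib


/-- The iterative scheme of Proposition 4.2: `dysonSeq a b n = (x_{n+1}, y_{n+1})`,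
i.e. `dysonSeq a b 0` is the pair `(x_1, y_1)` of the proposition. -/
noncomputable def dysonSeq (a b : ℝ) : ℕ → ℝ × ℝ
  | 0 =>
      ((a + Real.sqrt (a ^ 2 + 8)) / 2,
        ((b - (|a| + Real.sqrt 2) / 2)
          + Real.sqrt ((b - (|a| + Real.sqrt 2) / 2) ^ 2 + 6)) / 2)
  | n + 1 =>
      let p := dysonSeq a b n
      let A := a - 1 / p.2 + 1 / (p.1 + p.2)
      let B := b - 1 / p.1 + 1 / (p.1 + p.2)
      ((A + Real.sqrt (A ^ 2 + 8)) / 2, (B + Real.sqrt (B ^ 2 + 8)) / 2)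

lemma dyson_pos_aux (t c : ℝ) (hc : 0 < c) : 0 < (t + Real.sqrt (t ^ 2 + c)) / 2 := by
  have h : |t| < Real.sqrt (t ^ 2 + c) := by
    rw [← Real.sqrt_sq_eq_abs]
    exact Real.sqrt_lt_sqrt (sq_nonneg t) (by linarith)
  have := neg_abs_le t
  linarith

lemma dyson_mono_aux (t t' : ℝ) (h : t' < t) :
    (t' + Real.sqrt (t' ^ 2 + 8)) / 2 < (t + Real.sqrt (t ^ 2 + 8)) / 2 := by
  set x := (t' + Real.sqrt (t' ^ 2 + 8)) / 2 with hx
  have hxpos : 0 < x := dyson_pos_aux t' 8 (by norm_num)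
  have hs' : Real.sqrt (t' ^ 2 + 8) ^ 2 = t' ^ 2 + 8 := Real.sq_sqrt (by positivity)
  have hxeq : x ^ 2 = t' * x + 2 := by rw [hx]; nlinarith [hs']
  have hs : Real.sqrt (t ^ 2 + 8) ^ 2 = t ^ 2 + 8 := Real.sq_sqrt (by positivity)
  have hsn : 0 ≤ Real.sqrt (t ^ 2 + 8) := Real.sqrt_nonneg _
  have hst : t ≤ Real.sqrt (t ^ 2 + 8) := by nlinarith
  have key : x ^ 2 - t * x - 2 < 0 := by nlinarith [mul_pos hxpos (sub_pos.mpr h)]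
  nlinarith [mul_pos hxpos hxpos, key, hst, hsn, mul_self_nonneg (2 * x - t + Real.sqrt (t ^ 2 + 8))]

/-- Step 1 of the proof of Proposition 4.2. All iterates
`x_n, y_n` (here `x_n = (dysonSeq a b (n-1)).1`, `y_n = (dysonSeq a b (n-1)).2`)
are positive, and for `n ≥ 1` one has `x_{n+1} < (a + √(a²+8))/2` and
`y_{n+1} < (b + √(b²+8))/2`. -/
theorem dysonSeq_pos_and_bounded (a b : ℝ) :
    (∀ n : ℕ, 0 < (dysonSeq a b n).1 ∧ 0 < (dysonSeq a b n).2) ∧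
    (∀ n : ℕ, 1 ≤ n →
      (dysonSeq a b n).1 < (a + Real.sqrt (a ^ 2 + 8)) / 2 ∧
      (dysonSeq a b n).2 < (b + Real.sqrt (b ^ 2 + 8)) / 2) := by
  have hpos : ∀ n : ℕ, 0 < (dysonSeq a b n).1 ∧ 0 < (dysonSeq a b n).2 := by
    intro n
    induction n with
    | zero =>
        constructor
        · exact dyson_pos_aux a 8 (by norm_num)
        · exact dyson_pos_aux _ 6 (by norm_num)
    | succ m ih =>
        constructor
        · exact dyson_pos_aux _ 8 (by norm_num)
        · exact dyson_pos_aux _ 8 (by norm_num)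
  refine ⟨hpos, ?_⟩
  intro n hn
  obtain ⟨m, rfl⟩ := Nat.exists_eq_add_of_le hn
  obtain ⟨hx, hy⟩ := hpos m
  have hxy : 0 < (dysonSeq a b m).1 + (dysonSeq a b m).2 := by linarith
  have h1 : 1 / ((dysonSeq a b m).1 + (dysonSeq a b m).2) < 1 / (dysonSeq a b m).2 :=
    one_div_lt_one_div_of_lt hy (by linarith)
  have h2 : 1 / ((dysonSeq a b m).1 + (dysonSeq a b m).2) < 1 / (dysonSeq a b m).1 :=
    one_div_lt_one_div_of_lt hx (by linarith)
  have hA : a - 1 / (dysonSeq a b m).2 + 1 / ((dysonSeq a b m).1 + (dysonSeq a b m).2) < a := by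
    linarith
  have hB : b - 1 / (dysonSeq a b m).1 + 1 / ((dysonSeq a b m).1 + (dysonSeq a b m).2) < b := by
    linarith
  have hm : (1 + m) = m + 1 := by ring
  rw [hm]
  exact ⟨dyson_mono_aux a _ hA, dyson_mono_aux b _ hB⟩
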